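/- Let A be an invertible linear map on ℝ^d and ν a unit vector. Write Aν = u + ũ where u is the orthogonal projection of Aν onto the hyperplane A(ν^⊥). Then ‖ũ‖ = 1/‖(Aᵀ)⁻¹ ν‖. -/

import Mathlib

open scoped RealInnerProductSpace

set_option maxHeartbeats 1000000 in
/-- Write `Aν = u + ũ` where `u` is the orthogonal projection of `Aν` onto the hyperplane
`A(ν^⊥)`. Then `‖ũ‖ = 1 / ‖(Aᵀ)⁻¹ ν‖` (the transpose-inverse realized as the adjoint of
`A⁻¹`). -/
theorem stmt1 (d : ℕ) (A : EuclideanSpace ℝ (Fin d) ≃L[ℝ] EuclideanSpace ℝ (Fin d))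
    (ν : EuclideanSpace ℝ (Fin d)) (hν : ‖ν‖ = 1) :
    ‖A ν - (Submodule.orthogonalProjectionOnto
        (Submodule.map (A : EuclideanSpace ℝ (Fin d) →ₗ[ℝ] EuclideanSpace ℝ (Fin d))
          (ℝ ∙ ν)ᗮ) (A ν) :
        EuclideanSpace ℝ (Fin d))‖
      = 1 / ‖(LinearMap.adjoint
          (A.symm : EuclideanSpace ℝ (Fin d) →ₗ[ℝ] EuclideanSpace ℝ (Fin d))) ν‖ := by
  set w := (LinearMap.adjoint
      (A.symm : EuclideanSpace ℝ (Fin d) →ₗ[ℝ] EuclideanSpace ℝ (Fin d))) ν with hw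
  have hwin : ∀ x, ⟪w, x⟫ = ⟪ν, A.symm x⟫ := by
    intro x
    rw [hw, LinearMap.adjoint_inner_left]
    rfl
  have hwA : ⟪w, A ν⟫ = 1 := by
    rw [hwin, A.symm_apply_apply, real_inner_self_eq_norm_sq, hν]; norm_num
  have hwne : w ≠ 0 := by
    intro h
    rw [h, inner_zero_left] at hwA
    norm_num at hwA
  have hwn : ‖w‖ ≠ 0 := norm_ne_zero_iff.mpr hwne
  set S := Submodule.map (A : EuclideanSpace ℝ (Fin d) →ₗ[ℝ] EuclideanSpace ℝ (Fin d))
      (ℝ ∙ ν)ᗮ with hSdef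
  have hS : ∀ x, x ∈ S ↔ ⟪w, x⟫ = 0 := by
    intro x
    constructor
    · rintro ⟨y, hy, rfl⟩
      have hy' : ⟪ν, y⟫ = 0 := Submodule.mem_orthogonal_singleton_iff_inner_right.mp hy
      rw [hwin]
      simpa using hy'
    · intro hx
      refine ⟨A.symm x, Submodule.mem_orthogonal_singleton_iff_inner_right.mpr ?_, by simp⟩
      rw [hwin] at hx
      simpa using hx
  have key : (Submodule.orthogonalProjectionOnto S (A ν) : EuclideanSpace ℝ (Fin d))
      = A ν - (1 / ‖w‖ ^ 2) • w := by
    rw [Submodule.coe_orthogonalProjectionOnto_apply]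
    apply Submodule.eq_starProjection_of_mem_of_inner_eq_zero
    · rw [hS]
      rw [inner_sub_right, inner_smul_right, hwA, real_inner_self_eq_norm_sq]
      field_simp
      simp
    · intro x hx
      have hx' := (hS x).mp hx
      have : A ν - (A ν - (1 / ‖w‖ ^ 2) • w) = (1 / ‖w‖ ^ 2) • w := by abel
      have hx'' : ⟪x, w⟫ = 0 := by rw [real_inner_comm]; exact hx'
      rw [this, real_inner_smul_left]; simp [hx', hx'']
  rw [key]
  have : A ν - (A ν - (1 / ‖w‖ ^ 2) • w) = (1 / ‖w‖ ^ 2) • w := by abel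
  rw [this, norm_smul]
  simp only [norm_div, norm_one, Real.norm_eq_abs, abs_pow, abs_norm]
  field_simp
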